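/- arXiv:1204.0380 — 4 statements merged into one kernel-verified Lean document; each statement's English description precedes it below -/
import Mathlib

section
/- Let A, B be n×n matrices. The Strang splitting satisfies the second-order error bound ||exp(t(A+B)) - exp(tA/2) exp(tB) exp(tA/2)|| ≤ C t^3 for all t in a bounded interval [0,T], with C depending only on ||A||, ||B||, T. -/
attribute [local instance] Matrix.linftyOpNormedAddCommGroup Matrix.linftyOpNormedRing
  Matrix.linftyOpNormedAlgebra

set_option maxHeartbeats 1600000 in
/-- Second-order Strang splitting error bound:
    ‖exp(t(A+B)) − exp(tA/2)exp(tB)exp(tA/2)‖ ≤ C t³ on [0,T]. -/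
theorem stmt5 (n : ℕ) (A B : Matrix (Fin n) (Fin n) ℂ) (T : ℝ) (hT : 0 < T) :
    ∃ C : ℝ, 0 ≤ C ∧ ∀ t ∈ Set.Icc (0 : ℝ) T,
      ‖NormedSpace.exp (t • (A + B)) -
        NormedSpace.exp ((t / 2) • A) * NormedSpace.exp (t • B) *
          NormedSpace.exp ((t / 2) • A)‖ ≤ C * t ^ 3 := by
  classical
  set s : Set ℝ := Set.Icc (0 : ℝ) T with hs
  set A' : Matrix (Fin n) (Fin n) ℂ := (2⁻¹ : ℝ) • A with hA'
  set Cm : Matrix (Fin n) (Fin n) ℂ := A + B with hCm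
  set E : ℝ → Matrix (Fin n) (Fin n) ℂ := fun t => NormedSpace.exp (t • A') with hE
  set F : ℝ → Matrix (Fin n) (Fin n) ℂ := fun t => NormedSpace.exp (t • B) with hF
  set f : ℝ → Matrix (Fin n) (Fin n) ℂ := fun t => NormedSpace.exp (t • Cm) with hf
  -- the "word" functions
  set W : Matrix (Fin n) (Fin n) ℂ → ℝ → Matrix (Fin n) (Fin n) ℂ :=
    fun M t => E t * (M * F t) * E t with hW
  -- derivative facts for the exponentials
  have hEd : ∀ t : ℝ, HasDerivAt E (A' * E t) t := fun t =>
    hasDerivAt_exp_smul_const' (𝕂 := ℝ) A' t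
  have hEd' : ∀ t : ℝ, HasDerivAt E (E t * A') t := fun t =>
    hasDerivAt_exp_smul_const (𝕂 := ℝ) A' t
  have hFd : ∀ t : ℝ, HasDerivAt F (B * F t) t := fun t =>
    hasDerivAt_exp_smul_const' (𝕂 := ℝ) B t
  have hfd : ∀ t : ℝ, HasDerivAt f (f t * Cm) t := fun t =>
    hasDerivAt_exp_smul_const (𝕂 := ℝ) Cm t
  -- derivative of words
  have hWd : ∀ (M : Matrix (Fin n) (Fin n) ℂ) (t : ℝ),
      HasDerivAt (W M) (A' * W M t + W (M * B) t + W M t * A') t := by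
    intro M t
    have h1 : HasDerivAt (fun t => M * F t) (M * (B * F t)) t := (hFd t).const_mul M
    have h2 : HasDerivAt (fun t => E t * (M * F t))
        (A' * E t * (M * F t) + E t * (M * (B * F t))) t := (hEd t).mul h1
    have h3 := h2.mul (hEd' t)
    refine h3.congr_deriv ?_
    simp only [W]
    noncomm_ring
  -- named words and their derivatives
  set g : ℝ → Matrix (Fin n) (Fin n) ℂ := W 1 with hg
  set Q : ℝ → Matrix (Fin n) (Fin n) ℂ := W B with hQ
  set R : ℝ → Matrix (Fin n) (Fin n) ℂ := W (B * B) with hR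
  set S : ℝ → Matrix (Fin n) (Fin n) ℂ := W (B * B * B) with hSS
  set g1 : ℝ → Matrix (Fin n) (Fin n) ℂ := fun t => A' * g t + Q t + g t * A' with hg1
  set Q1 : ℝ → Matrix (Fin n) (Fin n) ℂ := fun t => A' * Q t + R t + Q t * A' with hQ1
  set R1 : ℝ → Matrix (Fin n) (Fin n) ℂ := fun t => A' * R t + S t + R t * A' with hR1
  set g2 : ℝ → Matrix (Fin n) (Fin n) ℂ := fun t => A' * g1 t + Q1 t + g1 t * A' with hg2
  set Q2 : ℝ → Matrix (Fin n) (Fin n) ℂ := fun t => A' * Q1 t + R1 t + Q1 t * A' with hQ2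
  set g3 : ℝ → Matrix (Fin n) (Fin n) ℂ := fun t => A' * g2 t + Q2 t + g2 t * A' with hg3
  have hgd : ∀ t, HasDerivAt g (g1 t) t := by
    intro t; have := hWd 1 t; simpa [g1, g, Q, one_mul] using this
  have hQd : ∀ t, HasDerivAt Q (Q1 t) t := by
    intro t; have := hWd B t; simpa [Q1, Q, R] using this
  have hRd : ∀ t, HasDerivAt R (R1 t) t := by
    intro t; have := hWd (B * B) t; simpa [R1, R, S] using this
  have hg1d : ∀ t, HasDerivAt g1 (g2 t) t := by
    intro t
    exact (((hgd t).const_mul A').add (hQd t)).add ((hgd t).mul_const A')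
  have hQ1d : ∀ t, HasDerivAt Q1 (Q2 t) t := by
    intro t
    exact (((hQd t).const_mul A').add (hRd t)).add ((hQd t).mul_const A')
  have hg2d : ∀ t, HasDerivAt g2 (g3 t) t := by
    intro t
    exact (((hg1d t).const_mul A').add (hQ1d t)).add ((hg1d t).mul_const A')
  -- f derivatives
  set f1 : ℝ → Matrix (Fin n) (Fin n) ℂ := fun t => f t * Cm with hf1
  set f2 : ℝ → Matrix (Fin n) (Fin n) ℂ := fun t => f1 t * Cm with hf2
  set f3 : ℝ → Matrix (Fin n) (Fin n) ℂ := fun t => f2 t * Cm with hf3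
  have hf1d : ∀ t, HasDerivAt f1 (f2 t) t := fun t => (hfd t).mul_const Cm
  have hf2d : ∀ t, HasDerivAt f2 (f3 t) t := fun t => (hf1d t).mul_const Cm
  -- h and its derivatives
  set h : ℝ → Matrix (Fin n) (Fin n) ℂ := fun t => f t - g t with hh
  set h1 : ℝ → Matrix (Fin n) (Fin n) ℂ := fun t => f1 t - g1 t with hh1
  set h2 : ℝ → Matrix (Fin n) (Fin n) ℂ := fun t => f2 t - g2 t with hh2
  set h3 : ℝ → Matrix (Fin n) (Fin n) ℂ := fun t => f3 t - g3 t with hh3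
  have hhd : ∀ t, HasDerivAt h (h1 t) t := fun t => (hfd t).sub (hgd t)
  have hh1d : ∀ t, HasDerivAt h1 (h2 t) t := fun t => (hf1d t).sub (hg1d t)
  have hh2d : ∀ t, HasDerivAt h2 (h3 t) t := fun t => (hf2d t).sub (hg2d t)
  -- values at 0
  have hE0 : E 0 = 1 := by simp [E, NormedSpace.exp_zero]
  have hF0 : F 0 = 1 := by simp [F, NormedSpace.exp_zero]
  have hf0 : f 0 = 1 := by simp [f, NormedSpace.exp_zero]
  have hW0 : ∀ M, W M 0 = M := by intro M; simp [W, hE0, hF0]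
  have hAA : A' + A' = A := by
    rw [hA', ← add_smul]; norm_num
  have hval0 : h 0 = 0 := by
    simp [h, hf0, g, hW0]
  have hval1 : h1 0 = 0 := by
    have : g1 0 = Cm := by
      simp only [g1, g, Q, hW0, mul_one, one_mul, hCm]
      rw [add_assoc, add_comm B A', ← add_assoc, hAA]
    simp [h1, f1, hf0, this]
  have hval2 : h2 0 = 0 := by
    have hg10 : g1 0 = Cm := by
      simp only [g1, g, Q, hW0, mul_one, one_mul, hCm]
      rw [add_assoc, add_comm B A', ← add_assoc, hAA]
    have : g2 0 = Cm * Cm := by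
      simp only [g2, Q1, hg10, Q, R, hW0, hCm, hA']
      simp only [smul_mul_assoc, mul_smul_comm, add_mul, mul_add]
      module
    simp [h2, f2, f1, hf0, this]
  -- continuity
  have cE : Continuous E := continuous_iff_continuousAt.mpr fun t => (hEd t).continuousAt
  have cF : Continuous F := continuous_iff_continuousAt.mpr fun t => (hFd t).continuousAt
  have cS : Continuous S := by
    simp only [hSS, hW]
    exact ((cE.mul (continuous_const.mul cF)).mul cE)
  have cR : Continuous R := continuous_iff_continuousAt.mpr fun t => (hRd t).continuousAt
  have cR1 : Continuous R1 := by
    simp only [hR1]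
    exact ((continuous_const.mul cR).add cS).add (cR.mul continuous_const)
  have cQ1 : Continuous Q1 := continuous_iff_continuousAt.mpr fun t => (hQ1d t).continuousAt
  have cQ2 : Continuous Q2 := by
    simp only [hQ2]
    exact ((continuous_const.mul cQ1).add cR1).add (cQ1.mul continuous_const)
  have cg2 : Continuous g2 := continuous_iff_continuousAt.mpr fun t => (hg2d t).continuousAt
  have cg3 : Continuous g3 := by
    simp only [hg3]
    exact ((continuous_const.mul cg2).add cQ2).add (cg2.mul continuous_const)
  have cf2 : Continuous f2 := continuous_iff_continuousAt.mpr fun t => (hf2d t).continuousAt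
  have cf3 : Continuous f3 := by
    simp only [hf3]; exact cf2.mul continuous_const
  have ch3 : Continuous h3 := by
    simp only [hh3]; exact cf3.sub cg3
  -- smoothness of h
  have hderiv : deriv h = h1 := funext fun t => (hhd t).deriv
  have hderiv1 : deriv h1 = h2 := funext fun t => (hh1d t).deriv
  have hderiv2 : deriv h2 = h3 := funext fun t => (hh2d t).deriv
  have hsmooth : ContDiff ℝ 3 h := by
    rw [show (3 : WithTop ℕ∞) = 2 + 1 by norm_num, contDiff_succ_iff_deriv]
    refine ⟨fun t => (hhd t).differentiableAt, by norm_num, ?_⟩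
    erw [hderiv, show (2 : WithTop ℕ∞) = 1 + 1 by norm_num, contDiff_succ_iff_deriv]
    refine ⟨fun t => (hh1d t).differentiableAt, by norm_num, ?_⟩
    erw [hderiv1, show (1 : WithTop ℕ∞) = 0 + 1 by norm_num, contDiff_succ_iff_deriv]
    refine ⟨fun t => (hh2d t).differentiableAt, by norm_num, ?_⟩
    erw [hderiv2, contDiff_zero]
    exact ch3
  -- iterated derivatives within s
  have hud : UniqueDiffOn ℝ s := uniqueDiffOn_Icc hT
  have it1 : ∀ t ∈ s, iteratedDerivWithin 1 h s t = h1 t := by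
    intro t ht
    rw [iteratedDerivWithin_succ, iteratedDerivWithin_zero]
    exact ((hhd t).hasDerivWithinAt).derivWithin (hud t ht)
  have it2 : ∀ t ∈ s, iteratedDerivWithin 2 h s t = h2 t := by
    intro t ht
    rw [iteratedDerivWithin_succ]
    have : derivWithin (iteratedDerivWithin 1 h s) s t = derivWithin h1 s t :=
      derivWithin_congr it1 (it1 t ht)
    refine this.trans ?_
    exact ((hh1d t).hasDerivWithinAt).derivWithin (hud t ht)
  have it3 : ∀ t ∈ s, iteratedDerivWithin 3 h s t = h3 t := by
    intro t ht
    rw [iteratedDerivWithin_succ]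
    have : derivWithin (iteratedDerivWithin 2 h s) s t = derivWithin h2 s t :=
      derivWithin_congr it2 (it2 t ht)
    refine this.trans ?_
    exact ((hh2d t).hasDerivWithinAt).derivWithin (hud t ht)
  -- bound on h3
  obtain ⟨M, hM⟩ := isCompact_Icc.exists_bound_of_continuousOn (ch3.continuousOn (s := s))
  have h0s : (0 : ℝ) ∈ s := Set.left_mem_Icc.mpr hT.le
  have hM0 : 0 ≤ M := le_trans (norm_nonneg _) (hM 0 h0s)
  -- taylor polynomial vanishes
  have htaylor : ∀ x : ℝ, taylorWithinEval h 2 s 0 x = 0 := by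
    intro x
    rw [show (2 : ℕ) = 1 + 1 from rfl, taylorWithinEval_succ, taylorWithinEval_succ,
      taylor_within_zero_eval, it1 0 h0s, it2 0 h0s, hval0, hval1, hval2]
    simp
  refine ⟨M / 2, by positivity, ?_⟩
  intro t ht
  have key := taylor_mean_remainder_bound (f := h) (a := 0) (b := T) (n := 2) hT.le
    (hsmooth.of_le (by norm_num)).contDiffOn ht (fun y hy => by rw [it3 y hy]; exact hM y hy)
  rw [htaylor t, sub_zero, sub_zero] at key
  have hht : h t = NormedSpace.exp (t • Cm) -
      NormedSpace.exp ((t / 2) • A) * NormedSpace.exp (t • B) *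
        NormedSpace.exp ((t / 2) • A) := by
    have hsm : (t / 2) • A = t • A' := by rw [hA', smul_smul]; ring_nf
    simp only [hh, hf, hg, hW, hE, hF, one_mul, hsm]
  rw [hht] at key
  calc _ ≤ M * t ^ 3 / 2 := by simpa [Nat.factorial] using key
    _ = M / 2 * t ^ 3 := by ring
end

section
/- Let A, B be bounded operators on a Banach space and let c solve c'(t) = (A+B)c(t), c(0) = c_0. Define the first iterative splitting approximation c_1 by c_1'(t) = A c_1(t) + B c_0 (with constant second argument, i.e., previous iterate c_0(t) ≡ c_0), c_1(0) = c_0. Then ||c(t) - c_1(t)|| ≤ C t^2 ||c_0|| for t in a bounded interval, with C depending only on ||A||, ||B||. -/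
set_option maxHeartbeats 1000000

open NormedSpace

lemma exp_tail_bound {𝔸 : Type*} [NormedRing 𝔸] [NormedAlgebra ℝ 𝔸] [CompleteSpace 𝔸]
    (x : 𝔸) (k : ℕ) (hk : 1 ≤ k) :
    ‖NormedSpace.exp x - ∑ i ∈ Finset.range k, ((i.factorial : ℝ))⁻¹ • x ^ i‖
      ≤ ‖x‖ ^ k * Real.exp ‖x‖ := by
  set f : ℕ → 𝔸 := fun n => ((n.factorial : ℝ))⁻¹ • x ^ n with hf
  have hsum : Summable f := NormedSpace.expSeries_summable' x
  have hnorm : Summable fun n => ‖f n‖ := NormedSpace.norm_expSeries_summable' x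
  have hexp : NormedSpace.exp x = ∑' n, f n := by
    rw [NormedSpace.exp_eq_tsum (𝕂 := ℝ)]
  have hsplit : (∑ i ∈ Finset.range k, f i) + ∑' n, f (n + k) = ∑' n, f n :=
    hsum.sum_add_tsum_nat_add k
  have hdiff : NormedSpace.exp x - ∑ i ∈ Finset.range k, f i = ∑' n, f (n + k) := by
    rw [hexp, ← hsplit]; abel
  rw [hdiff]
  have hns : Summable fun n => ‖f (n + k)‖ := (summable_nat_add_iff k).mpr hnorm
  have hb : ∀ n, ‖f (n + k)‖ ≤ ‖x‖ ^ k * (‖x‖ ^ n / n.factorial) := by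
    intro n
    have h1 : ‖f (n + k)‖ = ((n+k).factorial : ℝ)⁻¹ * ‖x ^ (n + k)‖ := by
      rw [hf, norm_smul, Real.norm_eq_abs, abs_of_nonneg (by positivity)]
    have h2 : ‖x ^ (n + k)‖ ≤ ‖x‖ ^ (n + k) :=
      norm_pow_le' x (by omega)
    have h3 : ((n+k).factorial : ℝ)⁻¹ ≤ (n.factorial : ℝ)⁻¹ := by
      apply inv_anti₀ (by positivity)
      exact_mod_cast Nat.factorial_le (by omega)
    calc ‖f (n + k)‖ ≤ (n.factorial : ℝ)⁻¹ * ‖x‖ ^ (n + k) := by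
          rw [h1]
          exact mul_le_mul h3 h2 (norm_nonneg _) (by positivity)
      _ = ‖x‖ ^ k * (‖x‖ ^ n / n.factorial) := by
          rw [pow_add]; field_simp
  have hrs : Summable fun n => ‖x‖ ^ k * (‖x‖ ^ n / n.factorial) :=
    (Real.summable_pow_div_factorial ‖x‖).mul_left _
  have s1 : ‖∑' n, f (n + k)‖ ≤ ∑' n, ‖f (n + k)‖ := norm_tsum_le_tsum_norm hns
  have s2 : ∑' n, ‖f (n + k)‖ ≤ ∑' n, ‖x‖ ^ k * (‖x‖ ^ n / n.factorial) := Summable.tsum_le_tsum hb hns hrs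
  have s3 : ∑' n, ‖x‖ ^ k * (‖x‖ ^ n / n.factorial) = ‖x‖ ^ k * ∑' n, ‖x‖ ^ n / n.factorial :=
    tsum_mul_left
  have s4 : ∑' n : ℕ, ‖x‖ ^ n / n.factorial = Real.exp ‖x‖ := by
    rw [Real.exp_eq_exp_ℝ, NormedSpace.exp_eq_tsum_div]
  calc ‖∑' n, f (n + k)‖ ≤ ∑' n, ‖f (n + k)‖ := s1
    _ ≤ _ := s2
    _ = _ := s3
    _ = ‖x‖ ^ k * Real.exp ‖x‖ := by rw [s4]

/-- First iterative-splitting approximation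
    c₁(t) = exp(tA)c₀ + ∫₀ᵗ exp((t−s)A) B c₀ ds satisfies
    ‖exp(t(A+B))c₀ − c₁(t)‖ ≤ C t² ‖c₀‖ on a bounded interval. -/
theorem stmt7 (X : Type*) [NormedAddCommGroup X] [NormedSpace ℝ X] [CompleteSpace X]
    (A B : X →L[ℝ] X) (c₀ : X) (T : ℝ) (hT : 0 < T)
    (c₁ : ℝ → X)
    (hc₁ : ∀ t : ℝ, c₁ t = NormedSpace.exp (t • A) c₀ +
      ∫ s in (0 : ℝ)..t, NormedSpace.exp ((t - s) • A) (B c₀)) :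
    ∃ C : ℝ, 0 ≤ C ∧ ∀ t ∈ Set.Icc (0 : ℝ) T,
      ‖NormedSpace.exp (t • (A + B)) c₀ - c₁ t‖ ≤ C * t ^ 2 * ‖c₀‖ := by
  set K : ℝ := ‖A‖ + ‖B‖ with hK
  have hK0 : 0 ≤ K := by positivity
  refine ⟨3 * K ^ 2 * Real.exp (T * K), by positivity, ?_⟩
  rintro t ⟨ht0, htT⟩
  -- continuity of the integrand
  have hcont : Continuous fun s : ℝ => NormedSpace.exp ((t - s) • A) (B c₀) := by
    exact (((continuous_iff_continuousAt.2 fun x => (NormedSpace.exp_analytic (𝕂 := ℝ) x).continuousAt).comp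
      (((continuous_const.sub continuous_id).smul continuous_const)))).clm_apply
      continuous_const
  have hint1 : IntervalIntegrable
      (fun s : ℝ => NormedSpace.exp ((t - s) • A) (B c₀)) MeasureTheory.volume 0 t :=
    hcont.intervalIntegrable 0 t
  have hint2 : IntervalIntegrable (fun _ : ℝ => B c₀) MeasureTheory.volume 0 t :=
    intervalIntegrable_const
  -- key algebraic decomposition
  have key : NormedSpace.exp (t • (A + B)) c₀ - c₁ t
      = (NormedSpace.exp (t • (A + B)) - 1 - t • (A + B)) c₀
        - (NormedSpace.exp (t • A) - 1 - t • A) c₀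
        - ∫ s in (0 : ℝ)..t, ((NormedSpace.exp ((t - s) • A) - 1) (B c₀)) := by
    have hsub : (∫ s in (0 : ℝ)..t, ((NormedSpace.exp ((t - s) • A) - 1) (B c₀)))
        = (∫ s in (0 : ℝ)..t, NormedSpace.exp ((t - s) • A) (B c₀)) - t • (B c₀) := by
      have : (fun s : ℝ => ((NormedSpace.exp ((t - s) • A) - 1) (B c₀)))
          = fun s : ℝ => NormedSpace.exp ((t - s) • A) (B c₀) - B c₀ := by
        funext s; simp [ContinuousLinearMap.sub_apply]
      rw [this, intervalIntegral.integral_sub hint1 hint2, intervalIntegral.integral_const,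
        sub_zero]
    rw [hc₁, hsub]
    simp only [ContinuousLinearMap.sub_apply, ContinuousLinearMap.one_apply,
      ContinuousLinearMap.smul_apply, ContinuousLinearMap.add_apply, smul_add]
    abel
  rw [key]
  have hexpTK : ∀ r : ℝ, r ≤ T * K → Real.exp r ≤ Real.exp (T * K) := fun r hr =>
    Real.exp_le_exp.mpr hr
  -- term 1
  have hAB : ‖A + B‖ ≤ K := norm_add_le A B
  have t1 : ‖(NormedSpace.exp (t • (A + B)) - 1 - t • (A + B)) c₀‖
      ≤ K ^ 2 * Real.exp (T * K) * t ^ 2 * ‖c₀‖ := by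
    have h := exp_tail_bound (t • (A + B)) 2 (by norm_num)
    have hsum2 : (∑ i ∈ Finset.range 2, ((i.factorial : ℝ))⁻¹ • (t • (A + B)) ^ i)
        = 1 + t • (A + B) := by
      simp [Finset.sum_range_succ]
    rw [hsum2, sub_add_eq_sub_sub] at h
    have hnx : ‖t • (A + B)‖ ≤ t * K := by
      calc ‖t • (A + B)‖ ≤ ‖t‖ * ‖A + B‖ := ContinuousLinearMap.opNorm_smul_le _ _
        _ ≤ t * K := by
            rw [Real.norm_eq_abs, abs_of_nonneg ht0]
            exact mul_le_mul_of_nonneg_left hAB ht0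
    have htK : t * K ≤ T * K := mul_le_mul_of_nonneg_right htT hK0
    calc ‖(NormedSpace.exp (t • (A + B)) - 1 - t • (A + B)) c₀‖
        ≤ ‖NormedSpace.exp (t • (A + B)) - 1 - t • (A + B)‖ * ‖c₀‖ :=
          ContinuousLinearMap.le_opNorm _ _
      _ ≤ (‖t • (A + B)‖ ^ 2 * Real.exp ‖t • (A + B)‖) * ‖c₀‖ :=
          mul_le_mul_of_nonneg_right h (norm_nonneg _)
      _ ≤ ((t * K) ^ 2 * Real.exp (T * K)) * ‖c₀‖ := by
          gcongr
          all_goals first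
            | exact norm_nonneg _
            | exact hnx
            | exact hnx.trans htK
      _ = K ^ 2 * Real.exp (T * K) * t ^ 2 * ‖c₀‖ := by ring
  -- term 2
  have hA : ‖A‖ ≤ K := by rw [hK]; linarith [norm_nonneg B]
  have t2 : ‖(NormedSpace.exp (t • A) - 1 - t • A) c₀‖
      ≤ K ^ 2 * Real.exp (T * K) * t ^ 2 * ‖c₀‖ := by
    have h := exp_tail_bound (t • A) 2 (by norm_num)
    have hsum2 : (∑ i ∈ Finset.range 2, ((i.factorial : ℝ))⁻¹ • (t • A) ^ i)
        = 1 + t • A := by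
      simp [Finset.sum_range_succ]
    rw [hsum2, sub_add_eq_sub_sub] at h
    have hnx : ‖t • A‖ ≤ t * K := by
      calc ‖t • A‖ ≤ ‖t‖ * ‖A‖ := ContinuousLinearMap.opNorm_smul_le _ _
        _ ≤ t * K := by
            rw [Real.norm_eq_abs, abs_of_nonneg ht0]
            exact mul_le_mul_of_nonneg_left hA ht0
    have htK : t * K ≤ T * K := mul_le_mul_of_nonneg_right htT hK0
    calc ‖(NormedSpace.exp (t • A) - 1 - t • A) c₀‖
        ≤ ‖NormedSpace.exp (t • A) - 1 - t • A‖ * ‖c₀‖ :=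
          ContinuousLinearMap.le_opNorm _ _
      _ ≤ (‖t • A‖ ^ 2 * Real.exp ‖t • A‖) * ‖c₀‖ :=
          mul_le_mul_of_nonneg_right h (norm_nonneg _)
      _ ≤ ((t * K) ^ 2 * Real.exp (T * K)) * ‖c₀‖ := by
          gcongr
          all_goals first
            | exact norm_nonneg _
            | exact hnx
            | exact hnx.trans htK
      _ = K ^ 2 * Real.exp (T * K) * t ^ 2 * ‖c₀‖ := by ring
  -- term 3
  have t3 : ‖∫ s in (0 : ℝ)..t, ((NormedSpace.exp ((t - s) • A) - 1) (B c₀))‖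
      ≤ K ^ 2 * Real.exp (T * K) * t ^ 2 * ‖c₀‖ := by
    have hbd : ∀ s ∈ Set.uIoc (0 : ℝ) t,
        ‖(NormedSpace.exp ((t - s) • A) - 1) (B c₀)‖
          ≤ t * K * Real.exp (T * K) * ‖B c₀‖ := by
      intro s hs
      rw [Set.uIoc_of_le ht0] at hs
      obtain ⟨hs0, hst⟩ := hs
      have hts0 : 0 ≤ t - s := by linarith
      have h := exp_tail_bound ((t - s) • A) 1 le_rfl
      have hsum1 : (∑ i ∈ Finset.range 1, ((i.factorial : ℝ))⁻¹ • ((t - s) • A) ^ i)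
          = 1 := by simp
      rw [hsum1, pow_one] at h
      have hnx : ‖(t - s) • A‖ ≤ t * K := by
        calc ‖(t - s) • A‖ ≤ ‖(t - s)‖ * ‖A‖ := ContinuousLinearMap.opNorm_smul_le _ _
          _ ≤ t * ‖A‖ := by
              rw [Real.norm_eq_abs, abs_of_nonneg hts0]
              exact mul_le_mul_of_nonneg_right (by linarith) (norm_nonneg A)
          _ ≤ t * K := mul_le_mul_of_nonneg_left hA ht0
      have htK : t * K ≤ T * K := mul_le_mul_of_nonneg_right htT hK0
      calc ‖(NormedSpace.exp ((t - s) • A) - 1) (B c₀)‖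
          ≤ ‖NormedSpace.exp ((t - s) • A) - 1‖ * ‖B c₀‖ :=
            ContinuousLinearMap.le_opNorm _ _
        _ ≤ (‖(t - s) • A‖ * Real.exp ‖(t - s) • A‖) * ‖B c₀‖ :=
            mul_le_mul_of_nonneg_right h (norm_nonneg _)
        _ ≤ (t * K * Real.exp (T * K)) * ‖B c₀‖ := by
            gcongr
            all_goals first
              | exact norm_nonneg _
              | exact hnx
              | exact hnx.trans htK
    have := intervalIntegral.norm_integral_le_of_norm_le_const hbd
    rw [sub_zero, abs_of_nonneg ht0] at this
    calc ‖∫ s in (0 : ℝ)..t, ((NormedSpace.exp ((t - s) • A) - 1) (B c₀))‖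
        ≤ t * K * Real.exp (T * K) * ‖B c₀‖ * t := this
      _ ≤ t * K * Real.exp (T * K) * (K * ‖c₀‖) * t := by
          gcongr
          calc ‖B c₀‖ ≤ ‖B‖ * ‖c₀‖ := ContinuousLinearMap.le_opNorm _ _
            _ ≤ K * ‖c₀‖ := by
                apply mul_le_mul_of_nonneg_right _ (norm_nonneg _)
                rw [hK]; linarith [norm_nonneg A]
      _ = K ^ 2 * Real.exp (T * K) * t ^ 2 * ‖c₀‖ := by ring
  calc ‖(NormedSpace.exp (t • (A + B)) - 1 - t • (A + B)) c₀
        - (NormedSpace.exp (t • A) - 1 - t • A) c₀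
        - ∫ s in (0 : ℝ)..t, ((NormedSpace.exp ((t - s) • A) - 1) (B c₀))‖
      ≤ ‖(NormedSpace.exp (t • (A + B)) - 1 - t • (A + B)) c₀
          - (NormedSpace.exp (t • A) - 1 - t • A) c₀‖
        + ‖∫ s in (0 : ℝ)..t, ((NormedSpace.exp ((t - s) • A) - 1) (B c₀))‖ :=
        norm_sub_le _ _
    _ ≤ (‖(NormedSpace.exp (t • (A + B)) - 1 - t • (A + B)) c₀‖
          + ‖(NormedSpace.exp (t • A) - 1 - t • A) c₀‖)
        + ‖∫ s in (0 : ℝ)..t, ((NormedSpace.exp ((t - s) • A) - 1) (B c₀))‖ := by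
        gcongr
        exact norm_sub_le _ _
    _ ≤ (K ^ 2 * Real.exp (T * K) * t ^ 2 * ‖c₀‖ + K ^ 2 * Real.exp (T * K) * t ^ 2 * ‖c₀‖)
        + K ^ 2 * Real.exp (T * K) * t ^ 2 * ‖c₀‖ := by gcongr
    _ = 3 * K ^ 2 * Real.exp (T * K) * t ^ 2 * ‖c₀‖ := by ring
end

section
/- Let A, B be bounded operators on a Banach space. Define the iterative splitting sequence by c_i'(t) = A c_i(t) + B c_{i-1}(t), c_i(0) = c_0, with initial guess c_0(t) = exp(t(A+B)) c_0 replaced by any function c_0(·). Then the error e_i(t) = c(t) - c_i(t), where c(t) = exp(t(A+B))c_0, satisfies the recursion e_i(t) = ∫_0^t exp((t-s)A) B e_{i-1}(s) ds, and hence ||e_i(t)|| ≤ (K t)^i / i! · sup_{s∈[0,t]} ||e_0(s)|| for K = e^{t||A||} ||B||. -/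
open scoped Nat

open NormedSpace intervalIntegral

noncomputable instance aux_ratAlg {X : Type*} [NormedAddCommGroup X] [NormedSpace ℝ X] :
    NormedAlgebra ℚ (X →L[ℝ] X) :=
  NormedAlgebra.restrictScalars ℚ ℝ (X →L[ℝ] X)

section Aux

variable {X : Type*} [NormedAddCommGroup X] [NormedSpace ℝ X] [CompleteSpace X]

lemma aux_norm_exp_le (A : X →L[ℝ] X) : ‖exp A‖ ≤ Real.exp ‖A‖ := by
  rw [exp_eq_tsum ℝ, Real.exp_eq_exp_ℝ, exp_eq_tsum ℝ]
  refine (norm_tsum_le_tsum_norm (norm_expSeries_summable' A)).trans ?_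
  refine Summable.tsum_le_tsum ?_ (norm_expSeries_summable' A) (expSeries_summable' (𝕂 := ℝ) ‖A‖)
  intro n
  rw [norm_smul, smul_eq_mul, Real.norm_eq_abs, abs_of_nonneg (by positivity)]
  gcongr
  cases n with
  | zero => simpa using (by exact ContinuousLinearMap.norm_id_le : ‖(1 : X →L[ℝ] X)‖ ≤ 1)
  | succ n => exact norm_pow_le' A n.succ_pos

lemma aux_exp_cont (A : X →L[ℝ] X) : Continuous fun t : ℝ => exp (t • A) :=
  exp_continuous.comp (continuous_id.smul continuous_const)

set_option synthInstance.maxHeartbeats 400000 in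
lemma aux_key (A B : X →L[ℝ] X) (c₀ : X) (t : ℝ) :
    exp (t • (A + B)) c₀ - exp (t • A) c₀ =
      ∫ s in (0:ℝ)..t, exp ((t - s) • A) (B (exp (s • (A + B)) c₀)) := by
  have hderiv : ∀ s : ℝ, HasDerivAt
      (fun s : ℝ => (exp ((t - s) • A) * exp (s • (A + B))) c₀)
      ((exp ((t - s) • A) * (B * exp (s • (A + B)))) c₀) s := by
    intro s
    have h1 : HasDerivAt (fun s : ℝ => exp ((t - s) • A))
        ((-1 : ℝ) • (A * exp ((t - s) • A))) s := by
      have := (hasDerivAt_exp_smul_const' (𝕂 := ℝ) A (t - s)).scomp s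
        (((hasDerivAt_id s).const_sub t))
      simpa [Function.comp_def] using this
    have h2 : HasDerivAt (fun s : ℝ => exp (s • (A + B)))
        ((A + B) * exp (s • (A + B))) s := hasDerivAt_exp_smul_const' (A + B) s
    have hmul := h1.mul h2
    have hcomm : A * exp ((t - s) • A) = exp ((t - s) • A) * A :=
      (((Commute.refl A).smul_right (t - s)).exp_right).eq
    have h3 : HasDerivAt (fun s : ℝ => exp ((t - s) • A) * exp (s • (A + B)))
        (exp ((t - s) • A) * (B * exp (s • (A + B)))) s := by
      refine hmul.congr_deriv ?_
      rw [neg_one_smul ℝ (A * exp ((t - s) • A)), hcomm]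
      noncomm_ring
    simpa using h3.clm_apply (hasDerivAt_const s c₀)
  have hint : IntervalIntegrable
      (fun s : ℝ => (exp ((t - s) • A) * (B * exp (s • (A + B)))) c₀) MeasureTheory.volume 0 t := by
    apply Continuous.intervalIntegrable
    exact (((exp_continuous.comp ((continuous_const.sub continuous_id).smul continuous_const)).mul
      (continuous_const.mul (exp_continuous.comp (continuous_id.smul continuous_const))))).clm_apply
      continuous_const
  have heq := intervalIntegral.integral_eq_sub_of_hasDerivAt (fun s _ => hderiv s) hint
  have h2 : (∫ s in (0:ℝ)..t, exp ((t - s) • A) (B (exp (s • (A + B)) c₀))) =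
      ∫ s in (0:ℝ)..t, (exp ((t - s) • A) * (B * exp (s • (A + B)))) c₀ := by
    simp [ContinuousLinearMap.mul_apply]
  rw [h2, heq]
  simp

end Aux

set_option synthInstance.maxHeartbeats 1000000 in
set_option maxHeartbeats 2000000 in
/-- Error recursion and factorial bound for the iterative splitting scheme:
    with c_{i+1}(t) = exp(tA)c₀ + ∫₀ᵗ exp((t−s)A) B c_i(s) ds and arbitrary continuous
    initial guess c_0(·) with c_0(0) = c₀, the errors e_i(t) = exp(t(A+B))c₀ − c_i(t)
    satisfy e_{i+1}(t) = ∫₀ᵗ exp((t−s)A) B e_i(s) ds and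
    ‖e_i(t)‖ ≤ (Kt)^i/i! · sup_{s∈[0,t]} ‖e_0(s)‖ with K = e^{t‖A‖}‖B‖. -/
theorem stmt8 (X : Type*) [NormedAddCommGroup X] [NormedSpace ℝ X] [CompleteSpace X]
    (A B : X →L[ℝ] X) (c₀ : X)
    (c : ℕ → ℝ → X) (hcont : Continuous (c 0)) (hinit : c 0 0 = c₀)
    (hrec : ∀ i : ℕ, ∀ t : ℝ, c (i + 1) t = NormedSpace.exp (t • A) c₀ +
      ∫ s in (0 : ℝ)..t, NormedSpace.exp ((t - s) • A) (B (c i s)))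
    (e : ℕ → ℝ → X)
    (he : ∀ i : ℕ, ∀ t : ℝ, e i t = NormedSpace.exp (t • (A + B)) c₀ - c i t) :
    ∀ i : ℕ, ∀ t : ℝ, 0 ≤ t →
      (e (i + 1) t = ∫ s in (0 : ℝ)..t, NormedSpace.exp ((t - s) • A) (B (e i s))) ∧
      ‖e i t‖ ≤ (Real.exp (t * ‖A‖) * ‖B‖ * t) ^ i / i ! *
        (⨆ s : Set.Icc (0 : ℝ) t, ‖e 0 s‖) := by
  have hce : ∀ t s : ℝ, exp ((t - s) • A) = exp (t • A) * exp ((-s) • A) := by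
    intro t s
    rw [sub_eq_add_neg, add_smul,
      exp_add_of_commute (((Commute.refl A).smul_left t).smul_right (-s))]
  have hccont : ∀ i, Continuous (c i) := by
    intro i
    induction i with
    | zero => exact hcont
    | succ i ih =>
      have hH : Continuous fun s : ℝ => exp ((-s) • A) (B (c i s)) :=
        ((aux_exp_cont A).comp continuous_neg).clm_apply (B.continuous.comp ih)
      have hHint : ∀ a b : ℝ, IntervalIntegrable (fun s => exp ((-s) • A) (B (c i s)))
          MeasureTheory.volume a b := fun a b => hH.intervalIntegrable a b
      have hrw : c (i+1) = fun t => exp (t • A)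
          (c₀ + ∫ s in (0:ℝ)..t, exp ((-s) • A) (B (c i s))) := by
        funext t
        rw [hrec i t, map_add, ← ContinuousLinearMap.intervalIntegral_comp_comm _ (hHint 0 t)]
        congr 1
        refine intervalIntegral.integral_congr fun s _ => ?_
        rw [hce t s, ContinuousLinearMap.mul_apply]
      rw [hrw]
      exact (aux_exp_cont A).clm_apply
        (continuous_const.add (intervalIntegral.continuous_primitive hHint 0))
  have hecont : ∀ i, Continuous (e i) := by
    intro i
    have : e i = fun t => exp (t • (A + B)) c₀ - c i t := funext (he i)
    rw [this]
    exact ((aux_exp_cont (A + B)).clm_apply continuous_const).sub (hccont i)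
  have hrec' : ∀ i, ∀ t : ℝ, e (i+1) t = ∫ s in (0:ℝ)..t, exp ((t - s) • A) (B (e i s)) := by
    intro i t
    have h1 : IntervalIntegrable (fun s => exp ((t - s) • A) (B (exp (s • (A + B)) c₀)))
        MeasureTheory.volume 0 t :=
      (((aux_exp_cont A).comp (continuous_const.sub continuous_id)).clm_apply
        (B.continuous.comp ((aux_exp_cont (A + B)).clm_apply continuous_const))).intervalIntegrable 0 t
    have h2 : IntervalIntegrable (fun s => exp ((t - s) • A) (B (c i s)))
        MeasureTheory.volume 0 t :=
      (((aux_exp_cont A).comp (continuous_const.sub continuous_id)).clm_apply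
        (B.continuous.comp (hccont i))).intervalIntegrable 0 t
    have habel : exp (t • (A + B)) c₀ -
        (exp (t • A) c₀ + ∫ s in (0:ℝ)..t, exp ((t - s) • A) (B (c i s)))
        = (exp (t • (A + B)) c₀ - exp (t • A) c₀) -
          ∫ s in (0:ℝ)..t, exp ((t - s) • A) (B (c i s)) := by abel
    rw [he (i+1) t, hrec i t, habel, aux_key A B c₀ t, ← intervalIntegral.integral_sub h1 h2]
    refine intervalIntegral.integral_congr fun s _ => ?_
    rw [he i s, map_sub, map_sub]
  have hbdd : ∀ t : ℝ, BddAbove (Set.range fun s : Set.Icc (0:ℝ) t => ‖e 0 s‖) := by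
    intro t
    have := (isCompact_Icc (a := (0:ℝ)) (b := t)).bddAbove_image ((hecont 0).norm.continuousOn)
    rwa [Set.image_eq_range] at this
  have hMmono : ∀ s t : ℝ, 0 ≤ s → s ≤ t →
      (⨆ u : Set.Icc (0:ℝ) s, ‖e 0 u‖) ≤ ⨆ u : Set.Icc (0:ℝ) t, ‖e 0 u‖ := by
    intro s t hs hst
    have hne : Nonempty (Set.Icc (0:ℝ) s) := ⟨⟨0, Set.mem_Icc.2 ⟨le_refl 0, hs⟩⟩⟩
    refine ciSup_le fun u => ?_
    exact le_ciSup (hbdd t) ⟨u, Set.mem_Icc.2 ⟨u.2.1, u.2.2.trans hst⟩⟩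
  have hbound : ∀ i, ∀ t : ℝ, 0 ≤ t → ‖e i t‖ ≤ (Real.exp (t * ‖A‖) * ‖B‖ * t) ^ i / i ! *
      (⨆ s : Set.Icc (0:ℝ) t, ‖e 0 s‖) := by
    intro i
    induction i with
    | zero =>
      intro t ht
      simpa using le_ciSup (hbdd t) (⟨t, Set.mem_Icc.2 ⟨ht, le_refl t⟩⟩ : Set.Icc (0:ℝ) t)
    | succ i ih =>
      intro t ht
      set K := Real.exp (t * ‖A‖) * ‖B‖ with hK
      have hK0 : 0 ≤ K := mul_nonneg (Real.exp_pos _).le (norm_nonneg _)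
      set M := (⨆ s : Set.Icc (0:ℝ) t, ‖e 0 s‖) with hM
      have hM0 : 0 ≤ M := Real.iSup_nonneg fun u => norm_nonneg _
      rw [hrec' i t]
      have hfc : Continuous fun s => exp ((t - s) • A) (B (e i s)) :=
        ((aux_exp_cont A).comp (continuous_const.sub continuous_id)).clm_apply
          (B.continuous.comp (hecont i))
      have hptwise : ∀ s ∈ Set.Icc (0:ℝ) t,
          ‖exp ((t - s) • A) (B (e i s))‖ ≤ K ^ (i+1) * M / i ! * s ^ i := by
        intro s hs
        obtain ⟨hs0, hst⟩ := hs
        have h2 : ‖exp ((t - s) • A)‖ ≤ Real.exp (t * ‖A‖) := by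
          refine (aux_norm_exp_le _).trans (Real.exp_le_exp.2 ?_)
          refine (_root_.norm_smul_le (t - s) A).trans ?_
          rw [Real.norm_eq_abs, abs_of_nonneg (by linarith : (0:ℝ) ≤ t - s)]
          exact mul_le_mul_of_nonneg_right (by linarith) (norm_nonneg A)
        have h3 : ‖e i s‖ ≤ K ^ i * s ^ i / i ! * M := by
          have hexp : Real.exp (s * ‖A‖) ≤ Real.exp (t * ‖A‖) :=
            Real.exp_le_exp.2 (mul_le_mul_of_nonneg_right hst (norm_nonneg A))
          calc ‖e i s‖ ≤ (Real.exp (s * ‖A‖) * ‖B‖ * s) ^ i / i ! *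
                (⨆ u : Set.Icc (0:ℝ) s, ‖e 0 u‖) := ih s hs0
            _ ≤ (K * s) ^ i / i ! * M := by
                have hbase : Real.exp (s * ‖A‖) * ‖B‖ * s ≤ K * s :=
                  mul_le_mul_of_nonneg_right (mul_le_mul_of_nonneg_right hexp (norm_nonneg B)) hs0
                have hpow : (Real.exp (s * ‖A‖) * ‖B‖ * s) ^ i ≤ (K * s) ^ i :=
                  pow_le_pow_left₀ (by positivity) hbase i
                have hfac : (0:ℝ) < i ! := by exact_mod_cast Nat.factorial_pos i
                exact mul_le_mul ((div_le_div_iff_of_pos_right hfac).2 hpow)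
                  (hMmono s t hs0 hst) (Real.iSup_nonneg fun u => norm_nonneg _) (by positivity)
            _ = K ^ i * s ^ i / i ! * M := by rw [mul_pow]
        calc ‖exp ((t - s) • A) (B (e i s))‖
            ≤ ‖exp ((t - s) • A)‖ * ‖B (e i s)‖ := ContinuousLinearMap.le_opNorm _ _
          _ ≤ Real.exp (t * ‖A‖) * (‖B‖ * (K ^ i * s ^ i / i ! * M)) := by
              refine mul_le_mul h2 ((B.le_opNorm _).trans ?_) (norm_nonneg _) (Real.exp_pos _).le
              exact mul_le_mul_of_nonneg_left h3 (norm_nonneg B)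
          _ = K ^ (i+1) * M / i ! * s ^ i := by rw [hK]; ring
      have hle1 : ‖∫ s in (0:ℝ)..t, exp ((t - s) • A) (B (e i s))‖
          ≤ ∫ s in (0:ℝ)..t, ‖exp ((t - s) • A) (B (e i s))‖ :=
        intervalIntegral.norm_integral_le_integral_norm ht
      have hle2 : (∫ s in (0:ℝ)..t, ‖exp ((t - s) • A) (B (e i s))‖)
          ≤ ∫ s in (0:ℝ)..t, K ^ (i+1) * M / i ! * s ^ i :=
        intervalIntegral.integral_mono_on ht (hfc.norm.intervalIntegrable 0 t)
          ((continuous_const.mul (continuous_pow i)).intervalIntegrable 0 t) hptwise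
      have hcalc : (∫ s in (0:ℝ)..t, K ^ (i+1) * M / i ! * s ^ i)
          = (K * t) ^ (i+1) / (i+1)! * M := by
        rw [intervalIntegral.integral_const_mul, integral_pow, Nat.factorial_succ]
        have hi : (0:ℝ) < i ! := by exact_mod_cast Nat.factorial_pos i
        rw [mul_pow]
        push_cast
        field_simp
        ring
      exact (hle1.trans hle2).trans_eq (by rw [hcalc])
  exact fun i t ht => ⟨hrec' i t, hbound i t ht⟩
end

section
/- Let A, B be bounded operators on a Banach space and define the one-sided iterative splitting c_i' = A c_i + B c_{i-1}, c_i(0) = c_0, with constant initialization c_0(t) ≡ c_0. Then ||exp(t(A+B)) c_0 - c_i(t)|| ≤ C t^i ||c_0|| for each fixed i ≥ 1, uniformly for t in a bounded interval, with C depending on i, ||A||, ||B||, T. -/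
open MeasureTheory intervalIntegral

set_option maxHeartbeats 1000000
set_option synthInstance.maxHeartbeats 1000000

namespace Stmt9Aux

variable {X : Type*} [NormedAddCommGroup X] [NormedSpace ℝ X] [CompleteSpace X]

lemma norm_exp_le (M : X →L[ℝ] X) : ‖NormedSpace.exp M‖ ≤ Real.exp ‖M‖ := by
  rw [NormedSpace.exp_eq_tsum ℝ, Real.exp_eq_exp_ℝ, NormedSpace.exp_eq_tsum ℝ]
  refine (norm_tsum_le_tsum_norm (NormedSpace.norm_expSeries_summable' (𝕂 := ℝ) M)).trans ?_
  refine Summable.tsum_le_tsum (fun n => ?_) (NormedSpace.norm_expSeries_summable' (𝕂 := ℝ) M)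
    (NormedSpace.expSeries_summable' (𝕂 := ℝ) ‖M‖)
  have hpow : ‖M ^ n‖ ≤ ‖M‖ ^ n := by
    cases n with
    | zero =>
      simpa [ContinuousLinearMap.one_def] using ContinuousLinearMap.norm_id_le (𝕜 := ℝ) (E := X)
    | succ m => exact norm_pow_le' M (Nat.succ_pos m)
  refine (norm_smul_le ((Nat.factorial n : ℝ)⁻¹) (M ^ n)).trans ?_
  rw [smul_eq_mul, norm_inv, Real.norm_natCast]
  exact mul_le_mul_of_nonneg_left hpow (by positivity)

lemma cont_exp (A : X →L[ℝ] X) : Continuous fun t : ℝ => NormedSpace.exp (t • A) := by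
  let +nondep : NormedAlgebra ℚ (X →L[ℝ] X) := .restrictScalars ℚ ℝ _
  exact NormedSpace.exp_continuous.comp (continuous_id.smul continuous_const)

lemma norm_exp_smul_le (A : X →L[ℝ] X) {t T : ℝ} (h : |t| ≤ T) :
    ‖NormedSpace.exp (t • A)‖ ≤ Real.exp (T * ‖A‖) := by
  refine (norm_exp_le _).trans (Real.exp_le_exp.2 ((norm_smul_le t A).trans ?_))
  rw [Real.norm_eq_abs]
  exact mul_le_mul_of_nonneg_right h (norm_nonneg A)

/-- Variation of constants formula for the true solution. -/
lemma voc (A B : X →L[ℝ] X) (c₀ : X) (t : ℝ) :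
    NormedSpace.exp (t • (A + B)) c₀ = NormedSpace.exp (t • A) c₀ +
      ∫ s in (0:ℝ)..t,
        NormedSpace.exp ((t - s) • A) (B (NormedSpace.exp (s • (A + B)) c₀)) := by
  set D := A + B with hD
  have hcontu : Continuous fun s : ℝ => NormedSpace.exp (s • D) c₀ :=
    (cont_exp D).clm_apply continuous_const
  have hcont : Continuous fun s : ℝ =>
      NormedSpace.exp ((t - s) • A) (B (NormedSpace.exp (s • D) c₀)) :=
    ((cont_exp A).comp (continuous_const.sub continuous_id)).clm_apply
      (B.continuous.comp hcontu)
  have key : ∀ s : ℝ,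
      HasDerivAt (fun s : ℝ => NormedSpace.exp ((t - s) • A) (NormedSpace.exp (s • D) c₀))
        (NormedSpace.exp ((t - s) • A) (B (NormedSpace.exp (s • D) c₀))) s := by
    intro s
    have h1 := hasDerivAt_exp_smul_const (𝕂 := ℝ) A (t - s)
    have h2 : HasDerivAt (fun s : ℝ => t - s) (-1) s := (hasDerivAt_id s).const_sub t
    have hM : HasDerivAt (fun s : ℝ => NormedSpace.exp ((t - s) • A))
        ((-1 : ℝ) • (NormedSpace.exp ((t - s) • A) * A)) s := by
      have := HasDerivAt.scomp (x := s) h1 h2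
      simpa [Function.comp_def] using this
    have hu : HasDerivAt (fun s : ℝ => NormedSpace.exp (s • D) c₀)
        ((NormedSpace.exp (s • D) * D) c₀ + NormedSpace.exp (s • D) 0) s :=
      (hasDerivAt_exp_smul_const (𝕂 := ℝ) D s).clm_apply (hasDerivAt_const s c₀)
    have h := hM.clm_apply hu
    convert h using 1
    have hc : NormedSpace.exp (s • D) * D = D * NormedSpace.exp (s • D) :=
      (((Commute.refl D).smul_left s).exp_left).eq
    rw [hc]
    simp only [ContinuousLinearMap.smul_apply, ContinuousLinearMap.mul_apply, map_zero,
      add_zero, neg_one_smul, ContinuousLinearMap.neg_apply]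
    rw [← map_neg, ← map_add]
    congr 1
    rw [hD]
    simp only [ContinuousLinearMap.add_apply]
    abel
  have hFTC := intervalIntegral.integral_eq_sub_of_hasDerivAt
    (f := fun s : ℝ => NormedSpace.exp ((t - s) • A) (NormedSpace.exp (s • D) c₀))
    (fun s _ => key s) (hcont.intervalIntegrable 0 t)
  rw [hFTC]
  simp only [sub_self, zero_smul, NormedSpace.exp_zero, ContinuousLinearMap.one_apply, sub_zero]
  abel

end Stmt9Aux

/-- One-sided iterative splitting with constant initialization c_0(t) ≡ c₀:
    ‖exp(t(A+B))c₀ − c_i(t)‖ ≤ C tⁱ ‖c₀‖ on [0,T] for each i ≥ 1. -/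
theorem stmt9 (X : Type*) [NormedAddCommGroup X] [NormedSpace ℝ X] [CompleteSpace X]
    (A B : X →L[ℝ] X) (c₀ : X) (T : ℝ) (hT : 0 < T)
    (c : ℕ → ℝ → X) (hinit : ∀ t : ℝ, c 0 t = c₀)
    (hrec : ∀ i : ℕ, ∀ t : ℝ, c (i + 1) t = NormedSpace.exp (t • A) c₀ +
      ∫ s in (0 : ℝ)..t, NormedSpace.exp ((t - s) • A) (B (c i s)))
    (i : ℕ) (hi : 1 ≤ i) :
    ∃ C : ℝ, 0 ≤ C ∧ ∀ t ∈ Set.Icc (0 : ℝ) T,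
      ‖NormedSpace.exp (t • (A + B)) c₀ - c i t‖ ≤ C * t ^ i * ‖c₀‖ := by
  clear hi
  set u : ℝ → X := fun t => NormedSpace.exp (t • (A + B)) c₀ with hu
  have hucont : Continuous u := (Stmt9Aux.cont_exp (A + B)).clm_apply continuous_const
  -- main induction
  have main : ∀ j : ℕ, Continuous (c j) ∧ ∃ K : ℝ, 0 ≤ K ∧
      ∀ t ∈ Set.Icc (0 : ℝ) T, ‖u t - c j t‖ ≤ K * t ^ j * ‖c₀‖ := by
    intro j
    induction j with
    | zero =>
      have hc0 : c 0 = fun _ => c₀ := funext hinit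
      refine ⟨hc0 ▸ continuous_const, Real.exp (T * ‖A + B‖) + 1, by positivity, ?_⟩
      intro t ht
      rw [hinit, pow_zero, mul_one]
      calc ‖u t - c₀‖ ≤ ‖u t‖ + ‖c₀‖ := norm_sub_le _ _
        _ ≤ Real.exp (T * ‖A + B‖) * ‖c₀‖ + 1 * ‖c₀‖ := by
            rw [one_mul]
            gcongr
            refine (ContinuousLinearMap.le_opNorm _ _).trans ?_
            gcongr
            exact Stmt9Aux.norm_exp_smul_le (A + B)
              (by rw [abs_of_nonneg ht.1]; exact ht.2)
        _ = (Real.exp (T * ‖A + B‖) + 1) * ‖c₀‖ := by ring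
    | succ j ih =>
      obtain ⟨hcj, K, hK0, hK⟩ := ih
      -- continuity of c (j+1)
      have hsplit : ∀ t s : ℝ, NormedSpace.exp ((t - s) • A) =
          NormedSpace.exp (t • A) * NormedSpace.exp ((-s) • A) := by
        intro t s
        let +nondep : NormedAlgebra ℚ (X →L[ℝ] X) := .restrictScalars ℚ ℝ _
        rw [← NormedSpace.exp_add_of_commute (((Commute.refl A).smul_left t).smul_right (-s))]
        congr 1
        rw [sub_smul, neg_smul, sub_eq_add_neg]
      have hgcont : Continuous fun s : ℝ => NormedSpace.exp ((-s) • A) (B (c j s)) :=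
        ((Stmt9Aux.cont_exp A).comp continuous_neg).clm_apply (B.continuous.comp hcj)
      have hintg : ∀ t : ℝ, IntervalIntegrable
          (fun s : ℝ => NormedSpace.exp ((-s) • A) (B (c j s))) volume 0 t :=
        fun t => hgcont.intervalIntegrable 0 t
      have hform : c (j + 1) = fun t => NormedSpace.exp (t • A) c₀ +
          NormedSpace.exp (t • A)
            (∫ s in (0:ℝ)..t, NormedSpace.exp ((-s) • A) (B (c j s))) := by
        funext t
        rw [hrec]
        congr 1
        rw [← ContinuousLinearMap.intervalIntegral_comp_comm _ (hintg t)]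
        refine intervalIntegral.integral_congr fun s _ => ?_
        rw [hsplit t s, ContinuousLinearMap.mul_apply]
      have hccont : Continuous (c (j + 1)) := by
        rw [hform]
        exact ((Stmt9Aux.cont_exp A).clm_apply continuous_const).add
          ((Stmt9Aux.cont_exp A).clm_apply
            (intervalIntegral.continuous_primitive (fun a b => hgcont.intervalIntegrable a b) 0))
      refine ⟨hccont, Real.exp (T * ‖A‖) * ‖B‖ * K, by positivity, ?_⟩
      intro t ht
      have hint1 : IntervalIntegrable
          (fun s : ℝ => NormedSpace.exp ((t - s) • A) (B (u s))) volume 0 t :=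
        (((Stmt9Aux.cont_exp A).comp (continuous_const.sub continuous_id)).clm_apply
          (B.continuous.comp hucont)).intervalIntegrable 0 t
      have hint2 : IntervalIntegrable
          (fun s : ℝ => NormedSpace.exp ((t - s) • A) (B (c j s))) volume 0 t :=
        (((Stmt9Aux.cont_exp A).comp (continuous_const.sub continuous_id)).clm_apply
          (B.continuous.comp hcj)).intervalIntegrable 0 t
      have heq : u t - c (j + 1) t =
          ∫ s in (0:ℝ)..t, NormedSpace.exp ((t - s) • A) (B (u s - c j s)) := by
        rw [hu]
        simp only
        rw [Stmt9Aux.voc A B c₀ t, hrec]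
        rw [add_sub_add_left_eq_sub, ← intervalIntegral.integral_sub hint1 hint2]
        refine intervalIntegral.integral_congr fun s _ => ?_
        rw [← map_sub, ← map_sub]
      rw [heq]
      have hbound : ∀ᵐ s ∂volume.restrict (Set.uIoc (0:ℝ) t),
          ‖NormedSpace.exp ((t - s) • A) (B (u s - c j s))‖ ≤
            Real.exp (T * ‖A‖) * ‖B‖ * K * ‖c₀‖ * s ^ j := by
        refine MeasureTheory.ae_restrict_of_forall_mem measurableSet_uIoc fun s hs => ?_
        rw [Set.uIoc_of_le ht.1] at hs
        have hs0 : 0 ≤ s := le_of_lt hs.1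
        have hst : s ≤ t := hs.2
        have hsT : s ≤ T := hst.trans ht.2
        calc ‖NormedSpace.exp ((t - s) • A) (B (u s - c j s))‖
            ≤ ‖NormedSpace.exp ((t - s) • A)‖ * (‖B‖ * ‖u s - c j s‖) := by
              refine (ContinuousLinearMap.le_opNorm _ _).trans ?_
              gcongr
              exact ContinuousLinearMap.le_opNorm _ _
          _ ≤ Real.exp (T * ‖A‖) * (‖B‖ * (K * s ^ j * ‖c₀‖)) := by
              gcongr
              · exact Stmt9Aux.norm_exp_smul_le A
                  (by rw [abs_of_nonneg (sub_nonneg.2 hst)]; linarith [ht.2])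
              · exact hK s ⟨hs0, hsT⟩
          _ = Real.exp (T * ‖A‖) * ‖B‖ * K * ‖c₀‖ * s ^ j := by ring
      have hgint : IntervalIntegrable
          (fun s : ℝ => Real.exp (T * ‖A‖) * ‖B‖ * K * ‖c₀‖ * s ^ j) volume 0 t :=
        (continuous_const.mul (continuous_pow j)).intervalIntegrable 0 t
      refine (intervalIntegral.norm_integral_le_abs_of_norm_le hbound hgint).trans ?_
      have hval : (∫ s in (0:ℝ)..t, Real.exp (T * ‖A‖) * ‖B‖ * K * ‖c₀‖ * s ^ j) =
          Real.exp (T * ‖A‖) * ‖B‖ * K * ‖c₀‖ * (t ^ (j + 1) / (j + 1)) := by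
        rw [intervalIntegral.integral_const_mul, integral_pow]
        norm_num
      have htp : (0:ℝ) ≤ t ^ (j + 1) / (j + 1) :=
        div_nonneg (pow_nonneg ht.1 _) (by positivity)
      rw [hval, abs_of_nonneg (mul_nonneg (by positivity) htp)]
      have hdiv : t ^ (j + 1) / (j + 1 : ℝ) ≤ t ^ (j + 1) := by
        apply div_le_self (pow_nonneg ht.1 _)
        exact_mod_cast Nat.one_le_iff_ne_zero.2 (Nat.succ_ne_zero j)
      calc Real.exp (T * ‖A‖) * ‖B‖ * K * ‖c₀‖ * (t ^ (j + 1) / (j + 1))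
          ≤ Real.exp (T * ‖A‖) * ‖B‖ * K * ‖c₀‖ * t ^ (j + 1) := by gcongr
        _ = Real.exp (T * ‖A‖) * ‖B‖ * K * t ^ (j + 1) * ‖c₀‖ := by ring
  obtain ⟨-, K, hK0, hK⟩ := main i
  exact ⟨K, hK0, hK⟩
end
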